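/- For every temporal election instance and every outcome o, there exists a proportional outcome o' whose egalitarian welfare is at least that of o; consequently the price of proportionality with respect to egalitarian welfare equals 1. -/
import Mathlib

open Finset

/-- The utility of agent `i` under outcome `o`. -/
noncomputable def util {P : Type*} {n ℓ : ℕ}
    (S : Fin n → Fin ℓ → Finset P) (i : Fin n) (o : Fin ℓ → P) : ℕ :=
  Nat.card {t : Fin ℓ // o t ∈ S i t}

/-- `μ_i`: the number of timesteps at which agent `i` approves at least one project. -/
noncomputable def mu {P : Type*} {n ℓ : ℕ}
    (S : Fin n → Fin ℓ → Finset P) (i : Fin n) : ℕ :=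
  Nat.card {t : Fin ℓ // S i t ≠ ∅}

/-- Greedy disjoint allocation: each agent `i` in `C` gets a subset `B i ⊆ T i` of
size `(T i).card / n`, pairwise disjoint. -/
lemma exists_disjoint_parts {α : Type*} [DecidableEq α] [Fintype α] {n : ℕ}
    (C : Finset (Fin n)) (T : Fin n → Finset α) :
    ∃ B : Fin n → Finset α, (∀ i, B i ⊆ T i) ∧ (∀ i ∈ C, (B i).card = (T i).card / n)
      ∧ (∀ i ∉ C, B i = ∅) ∧ (∀ i j, i ≠ j → Disjoint (B i) (B j)) := by
  induction C using Finset.strongInduction with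
  | _ C ih =>
    rcases C.eq_empty_or_nonempty with rfl | hC
    · exact ⟨fun _ => ∅, fun _ => empty_subset _, by simp, fun _ _ => rfl,
        fun _ _ _ => disjoint_empty_left _⟩
    · obtain ⟨i0, hi0C, hmax⟩ := C.exists_max_image (fun i => (T i).card) hC
      obtain ⟨B, hsub, hcard, hemp, hdisj⟩ := ih (C.erase i0) (Finset.erase_ssubset hi0C)
      set q := (T i0).card / n with hq
      set U := Finset.univ.biUnion B with hU
      have hUcard : U.card ≤ (n - 1) * q := by
        calc U.card ≤ ∑ j, (B j).card := Finset.card_biUnion_le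
          _ = ∑ j ∈ C.erase i0, (B j).card := by
              refine (Finset.sum_subset (subset_univ _) ?_).symm
              intro j _ hj
              simp [hemp j hj]
          _ ≤ (C.erase i0).card * q := by
              refine Finset.sum_le_card_nsmul _ _ q ?_
              intro j hj
              rw [hcard j hj]
              exact Nat.div_le_div_right (hmax j (Finset.mem_of_mem_erase hj))
          _ ≤ (n - 1) * q := by
              refine Nat.mul_le_mul_right q ?_
              have h1 : (C.erase i0).card = C.card - 1 := Finset.card_erase_of_mem hi0C
              have h2 : C.card ≤ n := by
                simpa using Finset.card_le_card (Finset.subset_univ C)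
              omega
      have hroom : q ≤ (T i0 \ U).card := by
        have h1 : n * q ≤ (T i0).card := by
          rw [hq, mul_comm]; exact Nat.div_mul_le_self _ _
        have h2 : (T i0).card - U.card ≤ (T i0 \ U).card := Finset.le_card_sdiff U (T i0)
        have h3 : (n - 1) * q + q ≤ n * q := by
          obtain ⟨k, rfl⟩ : ∃ k, n = k + 1 := ⟨n - 1, (Nat.succ_pred_eq_of_pos i0.pos).symm⟩
          simp [Nat.succ_mul]
        omega
      obtain ⟨B0, hB0sub, hB0card⟩ := Finset.exists_subset_card_eq hroom
      refine ⟨Function.update B i0 B0, ?_, ?_, ?_, ?_⟩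
      · intro i
        rcases eq_or_ne i i0 with rfl | h
        · simpa using hB0sub.trans (Finset.sdiff_subset)
        · simpa [Function.update_of_ne h] using hsub i
      · intro i hiC
        rcases eq_or_ne i i0 with rfl | h
        · simpa using hB0card
        · rw [Function.update_of_ne h]
          exact hcard i (Finset.mem_erase.mpr ⟨h, hiC⟩)
      · intro i hiC
        have h : i ≠ i0 := fun h => hiC (h ▸ hi0C)
        rw [Function.update_of_ne h]
        exact hemp i (fun hi => hiC (Finset.mem_of_mem_erase hi))
      · intro i j hij
        have key : ∀ k, k ≠ i0 → Disjoint B0 (B k) := by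
          intro k _
          refine Finset.disjoint_left.mpr ?_
          intro a ha hak
          have : a ∈ U := Finset.mem_biUnion.mpr ⟨k, Finset.mem_univ k, hak⟩
          exact (Finset.mem_sdiff.mp (hB0sub ha)).2 this
        rcases eq_or_ne i i0 with rfl | hi
        · rw [Function.update_self, Function.update_of_ne hij.symm]
          exact key j hij.symm
        · rw [Function.update_of_ne hi]
          rcases eq_or_ne j i0 with rfl | hj
          · rw [Function.update_self]
            exact (key i hi).symm
          · rw [Function.update_of_ne hj]
            exact hdisj i j hij

lemma util_eq {P : Type*} {n ℓ : ℕ} (S : Fin n → Fin ℓ → Finset P) (i : Fin n)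
    (o : Fin ℓ → P) [DecidablePred fun t => o t ∈ S i t] :
    util S i o = (Finset.univ.filter fun t => o t ∈ S i t).card := by
  simp [util, Nat.card_eq_fintype_card, Fintype.card_subtype]

lemma mu_eq {P : Type*} {n ℓ : ℕ} (S : Fin n → Fin ℓ → Finset P) (i : Fin n)
    [DecidablePred fun t => S i t ≠ ∅] :
    mu S i = (Finset.univ.filter fun t => S i t ≠ ∅).card := by
  simp [mu, Nat.card_eq_fintype_card, Fintype.card_subtype]

/-- For every outcome `o` there exists a proportional outcome `o'` whose
egalitarian welfare (minimum utility) is at least that of `o`; consequently the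
price of proportionality for egalitarian welfare is 1. -/
theorem prop_preserves_egal {P : Type*} [Fintype P] [Nonempty P] {n ℓ : ℕ}
    (hn : 1 ≤ n) (S : Fin n → Fin ℓ → Finset P) (o : Fin ℓ → P) :
    ∃ o' : Fin ℓ → P,
      (∀ i : Fin n, mu S i / n ≤ util S i o') ∧
      (Finset.univ.inf' (Finset.univ_nonempty_iff.mpr (Fin.pos_iff_nonempty.mp hn))
          (fun j => util S j o) ≤
        Finset.univ.inf' (Finset.univ_nonempty_iff.mpr (Fin.pos_iff_nonempty.mp hn))
          (fun j => util S j o')) := by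
  classical
  set hne := Finset.univ_nonempty_iff.mpr (Fin.pos_iff_nonempty.mp hn)
  set m := Finset.univ.inf' hne (fun j => util S j o) with hm
  have hmle : ∀ j, m ≤ util S j o := fun j => Finset.inf'_le _ (Finset.mem_univ j)
  -- choose m kept satisfied timesteps for each agent
  have hKex : ∀ j : Fin n, ∃ K ⊆ Finset.univ.filter (fun t => o t ∈ S j t), K.card = m := by
    intro j
    refine Finset.exists_subset_card_eq ?_
    rw [← util_eq]
    exact hmle j
  choose K_ hKsub hKcard using hKex
  set K : Finset (Fin ℓ) := Finset.univ.biUnion K_ with hK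
  have hKcard_le : K.card ≤ n * m := by
    calc K.card ≤ ∑ j, (K_ j).card := Finset.card_biUnion_le
      _ = n * m := by simp [hKcard, Finset.sum_const, Finset.card_univ, mul_comm]
  -- free nonempty timesteps
  set T : Fin n → Finset (Fin ℓ) :=
    fun i => (Finset.univ.filter (fun t => S i t ≠ ∅)) \ K with hT
  obtain ⟨B, hBsub, hBcard, _, hBdisj⟩ := exists_disjoint_parts Finset.univ T
  -- pick a project for each allocated timestep
  have hpick : ∀ t : Fin ℓ, (∃ i, t ∈ B i) → ∃ p : P, ∀ i, t ∈ B i → p ∈ S i t := by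
    intro t ⟨i, hi⟩
    have hne' : S i t ≠ ∅ := (Finset.mem_filter.mp (Finset.mem_sdiff.mp (hBsub i hi)).1).2
    obtain ⟨p, hp⟩ := Finset.nonempty_iff_ne_empty.mpr hne'
    refine ⟨p, fun j hj => ?_⟩
    rcases eq_or_ne j i with rfl | hji
    · exact hp
    · exact absurd (Finset.disjoint_left.mp (hBdisj j i hji) hj) (fun h => h hi)
  choose pick hpickmem using hpick
  set o' : Fin ℓ → P := fun t => if h : ∃ i, t ∈ B i then pick t h else o t with ho'
  have hBnotK : ∀ i t, t ∈ B i → t ∉ K :=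
    fun i t ht => (Finset.mem_sdiff.mp (hBsub i ht)).2
  have ho'K : ∀ t ∈ K, o' t = o t := by
    intro t ht
    have : ¬ ∃ i, t ∈ B i := fun ⟨i, hi⟩ => hBnotK i t hi ht
    simp [ho', this]
  have ho'B : ∀ i t, t ∈ B i → o' t ∈ S i t := by
    intro i t ht
    have h : ∃ j, t ∈ B j := ⟨i, ht⟩
    simp only [ho', dif_pos h]
    exact hpickmem t h i ht
  -- utility lower bound
  set satK : Fin n → Finset (Fin ℓ) := fun i => K.filter (fun t => o t ∈ S i t) with hsatK
  have hsm : ∀ i, m ≤ (satK i).card := by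
    intro i
    rw [← hKcard i]
    refine Finset.card_le_card ?_
    intro t ht
    exact Finset.mem_filter.mpr ⟨Finset.mem_biUnion.mpr ⟨i, Finset.mem_univ i, ht⟩,
      (Finset.mem_filter.mp (hKsub i ht)).2⟩
  have hutil : ∀ i, (satK i).card + (B i).card ≤ util S i o' := by
    intro i
    rw [util_eq]
    have hsub' : satK i ∪ B i ⊆ Finset.univ.filter (fun t => o' t ∈ S i t) := by
      intro t ht
      rcases Finset.mem_union.mp ht with h | h
      · have := Finset.mem_filter.mp h
        exact Finset.mem_filter.mpr ⟨Finset.mem_univ t, (ho'K t this.1) ▸ this.2⟩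
      · exact Finset.mem_filter.mpr ⟨Finset.mem_univ t, ho'B i t h⟩
    have hdis : Disjoint (satK i) (B i) := by
      refine Finset.disjoint_left.mpr ?_
      intro t ht htB
      exact hBnotK i t htB (Finset.mem_filter.mp ht).1
    calc (satK i).card + (B i).card = (satK i ∪ B i).card :=
          (Finset.card_union_of_disjoint hdis).symm
      _ ≤ _ := Finset.card_le_card hsub'
  -- proportionality
  refine ⟨o', ?_, ?_⟩
  · intro i
    have hμ : mu S i ≤ (T i).card + n * (satK i).card := by
      have hsplit : (T i).card + ((Finset.univ.filter (fun t => S i t ≠ ∅)) ∩ K).card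
          = (Finset.univ.filter (fun t => S i t ≠ ∅)).card :=
        Finset.card_sdiff_add_card_inter _ _
      have hk : ((Finset.univ.filter (fun t => S i t ≠ ∅)) ∩ K).card ≤ n * m := by
        exact le_trans (Finset.card_le_card (Finset.inter_subset_right)) hKcard_le
      have hmm : n * m ≤ n * (satK i).card := Nat.mul_le_mul_left n (hsm i)
      rw [mu_eq]
      omega
    calc mu S i / n ≤ ((T i).card + n * (satK i).card) / n := Nat.div_le_div_right hμ
      _ = (T i).card / n + (satK i).card := by
          rw [mul_comm, Nat.add_mul_div_right _ _ (by omega : 0 < n)]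
      _ = (B i).card + (satK i).card := by rw [hBcard i (Finset.mem_univ i)]
      _ ≤ util S i o' := by rw [add_comm]; exact hutil i
  · refine Finset.le_inf' _ _ ?_
    intro j _
    calc m ≤ (satK j).card := hsm j
      _ ≤ (satK j).card + (B j).card := Nat.le_add_right _ _
      _ ≤ util S j o' := hutil j
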